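/- Let n ≥ 2, let f_{jk} : 𝔹ⁿ → 𝔻 (for 2 ≤ j,k ≤ n) be holomorphic functions from the unit ball of ℂⁿ to the unit disc, and let 0 < ε < 1/(2n). Then the map ρ(z) := (z₁ + ε·Σ_{j,k=2}^n z_j z_k f_{jk}(z), 0, …, 0) is a holomorphic self-map of 𝔹ⁿ satisfying ρ∘ρ = ρ and ρ(z) = z for every z in the complex geodesic {(ζ,0,…,0) : ζ ∈ 𝔻}; i.e., ρ is a holomorphic retraction of 𝔹ⁿ onto that complex geodesic. -/

import Mathlib

open Metric Filter Set Topology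

theorem stmt5 (m : ℕ)
    (f : Fin (m+2) → Fin (m+2) → EuclideanSpace ℂ (Fin (m+2)) → ℂ)
    (hf : ∀ j k : Fin (m+2), j ≠ 0 → k ≠ 0 →
      DifferentiableOn ℂ (f j k) (ball (0 : EuclideanSpace ℂ (Fin (m+2))) 1) ∧
      MapsTo (f j k) (ball (0 : EuclideanSpace ℂ (Fin (m+2))) 1) (ball (0:ℂ) 1))
    (ε : ℝ) (hε0 : 0 < ε) (hε : ε < 1 / (2 * (m+2)))
    (ρ : EuclideanSpace ℂ (Fin (m+2)) → EuclideanSpace ℂ (Fin (m+2)))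
    (hρ : ∀ z, ρ z = (WithLp.equiv 2 (Fin (m+2) → ℂ)).symm (fun i =>
      if i = 0 then
        z 0 + (ε : ℂ) * ∑ j : Fin (m+2), ∑ k : Fin (m+2),
          (if j ≠ 0 ∧ k ≠ 0 then z j * z k * f j k z else 0)
      else 0)) :
    DifferentiableOn ℂ ρ (ball (0 : EuclideanSpace ℂ (Fin (m+2))) 1) ∧
    MapsTo ρ (ball (0 : EuclideanSpace ℂ (Fin (m+2))) 1)
      (ball (0 : EuclideanSpace ℂ (Fin (m+2))) 1) ∧
    (∀ z ∈ ball (0 : EuclideanSpace ℂ (Fin (m+2))) 1, ρ (ρ z) = ρ z) ∧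
    (∀ z ∈ ball (0 : EuclideanSpace ℂ (Fin (m+2))) 1,
      (∀ i : Fin (m+2), i ≠ 0 → z i = 0) → ρ z = z) := by
  classical
  set S : EuclideanSpace ℂ (Fin (m+2)) → ℂ := fun z =>
    ∑ j : Fin (m+2), ∑ k : Fin (m+2),
      (if j ≠ 0 ∧ k ≠ 0 then z j * z k * f j k z else 0) with hSdef
  set w : EuclideanSpace ℂ (Fin (m+2)) → ℂ := fun z => z 0 + (ε : ℂ) * S z with hwdef
  have hρ' : ∀ z, ρ z = EuclideanSpace.single (0 : Fin (m+2)) (w z) := by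
    intro z
    rw [hρ, EuclideanSpace.single]
    congr 1
    ext i
    by_cases hi : i = 0 <;> simp [hi, Pi.single_apply, hwdef, hSdef]
  have hcoord : ∀ i : Fin (m+2),
      Differentiable ℂ (fun z : EuclideanSpace ℂ (Fin (m+2)) => z i) := fun i =>
    (EuclideanSpace.proj (𝕜 := ℂ) i).differentiable
  -- differentiability of w
  have hw : DifferentiableOn ℂ w (ball (0 : EuclideanSpace ℂ (Fin (m+2))) 1) := by
    apply ((hcoord 0).differentiableOn).add
    apply (differentiableOn_const _).mul
    apply DifferentiableOn.fun_sum
    intro j _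
    apply DifferentiableOn.fun_sum
    intro k _
    by_cases hjk : j ≠ 0 ∧ k ≠ 0
    · simp only [if_pos hjk]
      exact (((hcoord j).differentiableOn.mul (hcoord k).differentiableOn).mul
        (hf j k hjk.1 hjk.2).1)
    · simp only [if_neg hjk]
      exact differentiableOn_const _
  -- norm estimate
  have hwlt : ∀ z ∈ ball (0 : EuclideanSpace ℂ (Fin (m+2))) 1, ‖w z‖ < 1 := by
    intro z hz
    rw [mem_ball_zero_iff] at hz
    set a : Fin (m+2) → ℝ := fun i => ‖z i‖ with hadef
    set b : Fin (m+2) → ℝ := fun i => if i ≠ 0 then a i else 0 with hbdef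
    have hnormsq : ‖z‖ ^ 2 = ∑ i, a i ^ 2 := by
      rw [EuclideanSpace.norm_eq, Real.sq_sqrt]
      positivity
    have hbsum : ∑ i, b i ^ 2 = ‖z‖ ^ 2 - a 0 ^ 2 := by
      have h1 : ∀ i : Fin (m+2), a i ^ 2 = b i ^ 2 + (if i = 0 then a 0 ^ 2 else 0) := by
        intro i; by_cases hi : i = 0 <;> simp [hbdef, hi]
      have h2 : ∑ i, a i ^ 2 = ∑ i, b i ^ 2 + a 0 ^ 2 := by
        rw [Finset.sum_congr rfl (fun i _ => h1 i), Finset.sum_add_distrib,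
          Finset.sum_ite_eq' Finset.univ (0 : Fin (m+2)) (fun _ => a 0 ^ 2)]
        simp
      rw [hnormsq, h2]; ring
    have hSle : ‖S z‖ ≤ (∑ j, b j) * (∑ k, b k) := by
      rw [Finset.sum_mul_sum]
      refine (norm_sum_le _ _).trans (Finset.sum_le_sum fun j _ => ?_)
      refine (norm_sum_le _ _).trans (Finset.sum_le_sum fun k _ => ?_)
      by_cases hjk : j ≠ 0 ∧ k ≠ 0
      · simp only [if_pos hjk]
        have hfle : ‖f j k z‖ ≤ 1 := by
          have := (hf j k hjk.1 hjk.2).2 (mem_ball_zero_iff.mpr hz)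
          exact (mem_ball_zero_iff.mp this).le
        calc ‖z j * z k * f j k z‖ = a j * a k * ‖f j k z‖ := by
              simp [hadef, norm_mul]
          _ ≤ a j * a k * 1 := by
              apply mul_le_mul_of_nonneg_left hfle; positivity
          _ = b j * b k := by simp [hbdef, hjk.1, hjk.2]
      · simp only [if_neg hjk, norm_zero]
        rcases not_and_or.mp hjk with h | h
        · simp [hbdef, not_not.mp h, mul_nonneg, hadef, norm_nonneg]
        · simp [hbdef, not_not.mp h]
    have hbnonneg : ∀ i, 0 ≤ b i := by
      intro i; by_cases hi : i ≠ 0 <;> simp [hbdef, hi, hadef, norm_nonneg] <;> positivity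
    have hcs : (∑ j, b j) * (∑ k, b k) ≤ (m+2) * ∑ j, b j ^ 2 := by
      have := sq_sum_le_card_mul_sum_sq (s := (Finset.univ : Finset (Fin (m+2)))) (f := b)
      simpa [sq, Finset.card_univ] using this
    have hr0 : (0:ℝ) ≤ a 0 := norm_nonneg _
    have hrz : a 0 ≤ ‖z‖ := by
      nlinarith [hnormsq, Finset.sum_le_sum (fun i (_ : i ∈ Finset.univ) =>
        sq_nonneg (a i)), norm_nonneg z,
        Finset.single_le_sum (f := fun i => a i ^ 2)
          (fun i _ => sq_nonneg (a i)) (Finset.mem_univ (0 : Fin (m+2)))]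
    have h2 : ε * (2 * (m+2)) < 1 := by
      have hc : (0:ℝ) < 2 * (m+2) := by positivity
      calc ε * (2*(m+2)) < (1/(2*(m+2))) * (2*(m+2)) := by
            exact mul_lt_mul_of_pos_right hε hc
        _ = 1 := by field_simp
    have hwle : ‖w z‖ ≤ a 0 + ε * ((m+2) * (‖z‖^2 - a 0 ^2)) := by
      rw [hwdef]
      refine (norm_add_le _ _).trans ?_
      have : ‖(ε:ℂ) * S z‖ = ε * ‖S z‖ := by
        simp [norm_mul, abs_of_pos hε0]
      rw [this]
      have hS2 : ‖S z‖ ≤ (m+2) * (‖z‖^2 - a 0 ^2) := by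
        calc ‖S z‖ ≤ (∑ j, b j) * (∑ k, b k) := hSle
          _ ≤ (m+2) * ∑ j, b j ^ 2 := hcs
          _ = (m+2) * (‖z‖^2 - a 0 ^2) := by rw [hbsum]
      exact add_le_add le_rfl (mul_le_mul_of_nonneg_left hS2 hε0.le)
    have ha1 : a 0 < 1 := lt_of_le_of_lt hrz hz
    have hz2 : ‖z‖^2 ≤ 1 := by nlinarith [norm_nonneg z]
    have hp : (0:ℝ) < (m:ℝ) + 2 := by positivity
    have hεm : ε * (((m:ℝ)+2) * (1 + a 0)) < 1 := by
      nlinarith [mul_nonneg (mul_nonneg hε0.le hp.le) (sub_nonneg.mpr ha1.le)]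
    have h3 : ε * (((m:ℝ)+2) * (‖z‖^2 - a 0^2)) ≤ ε * (((m:ℝ)+2)*(1 - a 0 ^2)) := by
      apply mul_le_mul_of_nonneg_left _ hε0.le
      apply mul_le_mul_of_nonneg_left _ hp.le
      linarith
    have h4 : ε * (((m:ℝ)+2)*(1 - a 0^2)) < 1 - a 0 := by
      nlinarith [mul_lt_mul_of_pos_right hεm (show (0:ℝ) < 1 - a 0 by linarith)]
    calc ‖w z‖ ≤ a 0 + ε * (((m:ℝ)+2) * (‖z‖^2 - a 0 ^2)) := hwle
      _ < 1 := by linarith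
  -- the four conclusions
  refine ⟨?_, ?_, ?_, ?_⟩
  · have : DifferentiableOn ℂ (fun z => w z • EuclideanSpace.single (0 : Fin (m+2)) (1:ℂ))
        (ball (0 : EuclideanSpace ℂ (Fin (m+2))) 1) := hw.smul_const _
    apply this.congr
    intro z _
    rw [hρ']
    ext i
    by_cases hi : i = 0 <;> simp [hi, EuclideanSpace.single_apply]
  · intro z hz
    rw [mem_ball_zero_iff, hρ', EuclideanSpace.norm_single]
    exact hwlt z hz
  · intro z hz
    have h0 : ∀ i : Fin (m+2), i ≠ 0 → (ρ z) i = 0 := by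
      intro i hi
      rw [hρ']
      simp [EuclideanSpace.single_apply, hi]
    have hS0 : S (ρ z) = 0 := by
      rw [hSdef]
      apply Finset.sum_eq_zero
      intro j _
      apply Finset.sum_eq_zero
      intro k _
      by_cases hjk : j ≠ 0 ∧ k ≠ 0
      · simp [if_pos hjk, h0 j hjk.1]
      · simp [if_neg hjk]
    have hwρ : w (ρ z) = w z := by
      rw [hwdef]
      simp only [hS0, mul_zero, add_zero]
      rw [hρ']
      simp [EuclideanSpace.single_apply]
      rfl
    rw [hρ' (ρ z), hwρ, hρ' z]
  · intro z hz hgeo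
    have hS0 : S z = 0 := by
      rw [hSdef]
      apply Finset.sum_eq_zero
      intro j _
      apply Finset.sum_eq_zero
      intro k _
      by_cases hjk : j ≠ 0 ∧ k ≠ 0
      · simp [if_pos hjk, hgeo j hjk.1]
      · simp [if_neg hjk]
    rw [hρ']
    ext i
    by_cases hi : i = 0
    · subst hi
      simp [EuclideanSpace.single_apply, hwdef, hS0]
    · simp [EuclideanSpace.single_apply, hi, hgeo i hi]
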